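/- Uniqueness of FASO up to pro-homotopy: if (U_{4ε_n}(A_n), q_{n,n+1}) and (U_{4δ_n}(B_n), q'_{n,n+1}) are two FASOs for the same compact metric space X, then the maps I_n : U_{4δ_{I(n)}}(B_{I(n)}) → U_{4ε_n}(A_n), I_n(C) = ⋃_{x∈C} B(x,ε_n) ∩ A_n, with I(n) = min{l : δ_l < ε_n/16}, are well-defined and continuous, and for m ≥ n the maps I_n ∘ q'_{I(n),I(m)} and q_{n,m} ∘ I_m are homotopic (their pointwise union has diameter < 4ε_n, giving a common upper bound in the poset U_{4ε_n}(A_n)). -/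

import Mathlib

open Metric Set Filter

/-- The FASO bonding map at one level: `q(C) = ⋃_{c ∈ C} B(c,ε) ∩ A`. -/
def qmap {X : Type*} [MetricSpace X] (ε : ℝ) (A : Set X) (C : Set X) : Set X :=
  ⋃ c ∈ C, Metric.ball c ε ∩ A

/-- Iterated bonding maps: `qdown ε A n k` is `q_{n, n+k}`, mapping subsets at level `n+k`
down to subsets at level `n`. -/
def qdown {X : Type*} [MetricSpace X] (ε : ℕ → ℝ) (A : ℕ → Set X) (n : ℕ) :
    ℕ → Set X → Set X
  | 0, C => C
  | k + 1, C => qdown ε A n k (qmap (ε (n + k)) (A (n + k)) C)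

/-- `A_m(x)`: the set of nearest points of `A` to `x`. -/
def nearestPts {X : Type*} [MetricSpace X] (x : X) (A : Set X) : Set X :=
  {a ∈ A | dist x a = Metric.infDist x A}

/-- `X_*^n = ⋃_{m > n} q_{n,m}(A_m(x))`. -/
def Xstar {X : Type*} [MetricSpace X] (ε : ℕ → ℝ) (A : ℕ → Set X) (x : X) (n : ℕ) :
    Set X :=
  ⋃ m, ⋃ (_ : n < m), qdown ε A n (m - n) (nearestPts x (A m))

theorem qmap_subset' {X : Type*} [MetricSpace X] (ε : ℝ) (A C : Set X) :
    qmap ε A C ⊆ A := by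
  intro y hy
  simp only [qmap, mem_iUnion, mem_inter_iff] at hy
  exact hy.choose_spec.choose_spec.2

theorem qmap_track {X : Type*} [MetricSpace X] {ε : ℝ} {A C : Set X} {y : X}
    (hy : y ∈ qmap ε A C) : ∃ c ∈ C, dist y c < ε := by
  simp only [qmap, mem_iUnion, mem_inter_iff, mem_ball] at hy
  obtain ⟨c, hc, hb, _⟩ := hy
  exact ⟨c, hc, hb⟩

theorem qmap_nonempty' {X : Type*} [MetricSpace X] {ε : ℝ} {A C : Set X}
    (h : ∀ x : X, ∃ a ∈ A, dist x a < ε) (hC : C.Nonempty) : (qmap ε A C).Nonempty := by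
  obtain ⟨c, hc⟩ := hC
  obtain ⟨a, ha, hd⟩ := h c
  exact ⟨a, by
    simp only [qmap, mem_iUnion, mem_inter_iff, mem_ball]
    exact ⟨c, hc, by simpa [dist_comm] using hd, ha⟩⟩

theorem qdown_nonempty' {X : Type*} [MetricSpace X] {ε : ℕ → ℝ} {A : ℕ → Set X}
    (h : ∀ j, ∀ x : X, ∃ a ∈ A j, dist x a < ε j) (n k : ℕ) :
    ∀ C : Set X, C.Nonempty → (qdown ε A n k C).Nonempty := by
  induction k with
  | zero => intro C hC; exact hC
  | succ k ih =>
    intro C hC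
    exact ih _ (qmap_nonempty' (h (n + k)) hC)

theorem qdown_track {X : Type*} [MetricSpace X] {ε : ℕ → ℝ} {A : ℕ → Set X}
    (hhalf : ∀ j, 2 * ε (j + 1) ≤ ε j) (n k : ℕ) :
    ∀ C : Set X, ∀ y ∈ qdown ε A n k C, ∃ c ∈ C, dist y c ≤ 2 * ε n - 2 * ε (n + k) := by
  induction k with
  | zero => intro C y hy; exact ⟨y, hy, by simp⟩
  | succ k ih =>
    intro C y hy
    obtain ⟨d, hd, hyd⟩ := ih _ y hy
    obtain ⟨c, hc, hdc⟩ := qmap_track hd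
    refine ⟨c, hc, ?_⟩
    have h1 := hhalf (n + k)
    have : n + (k + 1) = (n + k) + 1 := rfl
    rw [this]
    calc dist y c ≤ dist y d + dist d c := dist_triangle _ _ _
      _ ≤ 2 * ε n - 2 * ε (n + k) + ε (n + k) := by linarith
      _ ≤ 2 * ε n - 2 * ε (n + k + 1) := by linarith

theorem qdown_qmap_subset {X : Type*} [MetricSpace X] (ε : ℕ → ℝ) (A : ℕ → Set X)
    (n k : ℕ) : ∀ D : Set X,
    qdown ε A n k (qmap (ε (n + k)) (A (n + k)) D) ⊆ A n := by
  induction k with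
  | zero => intro D; simpa [qdown] using qmap_subset' (ε n) (A n) D
  | succ k ih =>
    intro D
    show qdown ε A n k (qmap (ε (n + k)) (A (n + k)) _) ⊆ A n
    exact ih _

theorem diam_le_of_close {X : Type*} [MetricSpace X] {C S : Set X} {ρ : ℝ}
    (hbC : Bornology.IsBounded C) (hρ : 0 ≤ ρ)
    (h : ∀ y ∈ S, ∃ c ∈ C, dist y c ≤ ρ) :
    Metric.diam S ≤ 2 * ρ + Metric.diam C := by
  apply Metric.diam_le_of_forall_dist_le (by have := Metric.diam_nonneg (s := C); linarith)
  intro y hy y' hy'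
  obtain ⟨c, hc, h1⟩ := h y hy
  obtain ⟨c', hc', h2⟩ := h y' hy'
  have h3 : dist c c' ≤ Metric.diam C := Metric.dist_le_diam_of_mem hbC hc hc'
  have := dist_triangle4 y c c' y'
  have h4 : dist c' y' = dist y' c' := dist_comm _ _
  linarith

/-- Uniqueness of FASO up to pro-homotopy: given two FASOs `(U_{4ε_n}(A_n), q)` and
`(U_{4δ_n}(B_n), q')` for the same compact metric space `X`, with
`I(n) = min { l : δ_l < ε_n/16 }`, the maps `I_n(C) = ⋃_{x∈C} B(x,ε_n) ∩ A_n` from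
`U_{4δ_{I(n)}}(B_{I(n)})` to `U_{4ε_n}(A_n)` are well-defined and monotone (hence
continuous for the Alexandroff topologies of reverse inclusion), and for `m ≥ n` the
maps `I_n ∘ q'_{I(n),I(m)}` and `q_{n,m} ∘ I_m` are homotopic: their pointwise union is
a nonempty subset of `A_n` of diameter `< 4ε_n`, a common upper bound in the poset
`U_{4ε_n}(A_n)`. -/
theorem stmt_19 {X : Type*} [MetricSpace X] [CompactSpace X] [Nonempty X]
    (ε : ℕ → ℝ) (A : ℕ → Set X) (γ : ℕ → ℝ)
    (hεpos : ∀ n, 0 < ε n)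
    (hεlim : Filter.Tendsto ε Filter.atTop (nhds 0))
    (hAfin : ∀ n, (A n).Finite)
    (hApprox : ∀ n, ∀ x : X, ∃ a ∈ A n, dist x a < ε n)
    (hγ : ∀ n, IsLUB (Set.range fun x : X => Metric.infDist x (A n)) (γ n))
    (hrec : ∀ n, ε (n + 1) < (ε n - γ n) / 2)
    (δ : ℕ → ℝ) (B : ℕ → Set X) (γ' : ℕ → ℝ)
    (hδpos : ∀ n, 0 < δ n)
    (hδlim : Filter.Tendsto δ Filter.atTop (nhds 0))
    (hBfin : ∀ n, (B n).Finite)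
    (hBApprox : ∀ n, ∀ x : X, ∃ b ∈ B n, dist x b < δ n)
    (hγ' : ∀ n, IsLUB (Set.range fun x : X => Metric.infDist x (B n)) (γ' n))
    (hrec' : ∀ n, δ (n + 1) < (δ n - γ' n) / 2)
    (I : ℕ → ℕ)
    (hI : ∀ n, δ (I n) < ε n / 16 ∧ ∀ l, δ l < ε n / 16 → I n ≤ l) :
    (∀ n, ∀ C : Set X, C ⊆ B (I n) → C.Nonempty → Metric.diam C < 4 * δ (I n) →
        qmap (ε n) (A n) C ⊆ A n ∧ (qmap (ε n) (A n) C).Nonempty ∧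
          Metric.diam (qmap (ε n) (A n) C) < 4 * ε n) ∧
      (∀ n, ∀ C D : Set X, C ⊆ D → qmap (ε n) (A n) C ⊆ qmap (ε n) (A n) D) ∧
      ∀ n m, n ≤ m → ∀ C : Set X, C ⊆ B (I m) → C.Nonempty →
        Metric.diam C < 4 * δ (I m) →
        (qmap (ε n) (A n) (qdown δ B (I n) (I m - I n) C) ∪
            qdown ε A n (m - n) (qmap (ε m) (A m) C)) ⊆ A n ∧
        (qmap (ε n) (A n) (qdown δ B (I n) (I m - I n) C) ∪
            qdown ε A n (m - n) (qmap (ε m) (A m) C)).Nonempty ∧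
        Metric.diam (qmap (ε n) (A n) (qdown δ B (I n) (I m - I n) C) ∪
            qdown ε A n (m - n) (qmap (ε m) (A m) C)) < 4 * ε n := by
    -- nonnegativity of γ, γ'
  have hγ0 : ∀ n, 0 ≤ γ n := fun n => by
    obtain ⟨x⟩ := (inferInstance : Nonempty X)
    have h1 : Metric.infDist x (A n) ≤ γ n := (hγ n).1 ⟨x, rfl⟩
    have h2 : (0:ℝ) ≤ Metric.infDist x (A n) := Metric.infDist_nonneg
    linarith
  have hγ'0 : ∀ n, 0 ≤ γ' n := fun n => by
    obtain ⟨x⟩ := (inferInstance : Nonempty X)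
    have h1 : Metric.infDist x (B n) ≤ γ' n := (hγ' n).1 ⟨x, rfl⟩
    have h2 : (0:ℝ) ≤ Metric.infDist x (B n) := Metric.infDist_nonneg
    linarith
  have hεhalf : ∀ j, 2 * ε (j + 1) ≤ ε j := fun j => by
    have := hrec j; have := hγ0 j; linarith
  have hδhalf : ∀ j, 2 * δ (j + 1) ≤ δ j := fun j => by
    have := hrec' j; have := hγ'0 j; linarith
  have hεanti : Antitone ε := antitone_nat_of_succ_le fun j => by
    have := hεhalf j; have := hεpos (j + 1); linarith
  have hδanti : Antitone δ := antitone_nat_of_succ_le fun j => by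
    have := hδhalf j; have := hδpos (j + 1); linarith
  have hImono : ∀ {n m : ℕ}, n ≤ m → I n ≤ I m := by
    intro n m hnm
    refine (hI n).2 (I m) (lt_of_lt_of_le (hI m).1 ?_)
    have := hεanti hnm; linarith
  refine ⟨?_, ?_, ?_⟩
  · -- well-definedness of I_n
    intro n C hCB hCne hCd
    refine ⟨qmap_subset' _ _ _, qmap_nonempty' (hApprox n) hCne, ?_⟩
    have hbC : Bornology.IsBounded C := ((hBfin (I n)).subset hCB).isBounded
    have hle := diam_le_of_close (S := qmap (ε n) (A n) C) hbC (hεpos n).le (fun y hy => by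
      obtain ⟨c, hc, hd⟩ := qmap_track hy; exact ⟨c, hc, hd.le⟩)
    have hδε := (hI n).1
    have := hεpos n
    linarith
  · -- monotonicity of I_n
    intro n C D hCD
    intro y hy
    simp only [qmap, mem_iUnion, mem_inter_iff] at hy ⊢
    obtain ⟨c, hc, h1, h2⟩ := hy
    exact ⟨c, hCD hc, h1, h2⟩
  · -- homotopy: common upper bound
    intro n m hnm C hCB hCne hCd
    obtain ⟨k, rfl⟩ : ∃ k, m = n + k := ⟨m - n, (Nat.add_sub_cancel' hnm).symm⟩
    have hpr : I n ≤ I (n + k) := hImono (Nat.le_add_right n k)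
    obtain ⟨j, hj⟩ : ∃ j, I (n + k) = I n + j := ⟨I (n + k) - I n, (Nat.add_sub_cancel' hpr).symm⟩
    have hsub1 : I (n + k) - I n = j := by omega
    have hsub2 : n + k - n = k := by omega
    rw [hsub1, hsub2]
    have hδIn : δ (I n) < ε n / 16 := (hI n).1
    have hδIm : δ (I (n + k)) < ε (n + k) / 16 := (hI (n + k)).1
    have hδmm : δ (I (n + k)) ≤ δ (I n) := hδanti hpr
    have hεm : ε (n + k) ≤ ε n := hεanti (Nat.le_add_right n k)
    have hεn := hεpos n
    have hεmp := hεpos (n + k)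
    have hδmp := hδpos (I (n + k))
    set ρ : ℝ := 2 * ε n - 2 * δ (I (n + k)) with hρdef
    have hρ0 : 0 ≤ ρ := by simp only [hρdef]; linarith
    have hS1sub : qmap (ε n) (A n) (qdown δ B (I n) j C) ⊆ A n := qmap_subset' _ _ _
    have hS2sub : qdown ε A n k (qmap (ε (n + k)) (A (n + k)) C) ⊆ A n :=
      qdown_qmap_subset ε A n k C
    have hS1ne : (qmap (ε n) (A n) (qdown δ B (I n) j C)).Nonempty :=
      qmap_nonempty' (hApprox n) (qdown_nonempty' hBApprox (I n) j C hCne)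
    refine ⟨union_subset hS1sub hS2sub, Set.union_nonempty.mpr (Or.inl hS1ne), ?_⟩
    have htrack : ∀ y ∈ qmap (ε n) (A n) (qdown δ B (I n) j C) ∪
        qdown ε A n k (qmap (ε (n + k)) (A (n + k)) C), ∃ c ∈ C, dist y c ≤ ρ := by
      rintro y (hy | hy)
      · obtain ⟨d, hd, hyd⟩ := qmap_track hy
        obtain ⟨c, hc, hdc⟩ := qdown_track hδhalf (I n) j C d hd
        rw [← hj] at hdc
        refine ⟨c, hc, ?_⟩
        have := dist_triangle y d c
        simp only [hρdef]
        linarith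
      · obtain ⟨d, hd, hyd⟩ := qdown_track hεhalf n k _ y hy
        obtain ⟨c, hc, hdc⟩ := qmap_track hd
        refine ⟨c, hc, ?_⟩
        have := dist_triangle y d c
        simp only [hρdef]
        linarith
    have hbC : Bornology.IsBounded C := ((hBfin (I (n + k))).subset hCB).isBounded
    have hle := diam_le_of_close hbC hρ0 htrack
    simp only [hρdef] at hle
    linarith
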